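/- Let Ω_O ⊆ ℝ², and for ε, λ > 0 let Ω_I = ⋃_{n∈ℤ} {x ∈ ℝ² : x₁ = λn, x₂ ≥ λ²n² + ε²}. Then conv(Ω_I) = {x ∈ ℝ² : x₂ ≥ g(x₁)}, where g is the piecewise-linear function interpolating the points (λn, λ²n² + ε²), n ∈ ℤ. In particular, conv(Ω_I) is closed and its boundary contains no rays. -/

import Mathlib

open Set

noncomputable def interpG (ε lam t : ℝ) : ℝ :=
  (lam * (⌊t / lam⌋ : ℝ))^2 + ε^2 + lam * (2 * (⌊t / lam⌋ : ℝ) + 1) * (t - lam * (⌊t / lam⌋ : ℝ))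

/-- The affine function giving the n-th linear piece. -/
noncomputable def ellG (ε lam : ℝ) (m : ℤ) (t : ℝ) : ℝ :=
  (lam * m)^2 + ε^2 + lam * (2 * m + 1) * (t - lam * m)

lemma interpG_eq_ell (ε lam t : ℝ) : interpG ε lam t = ellG ε lam ⌊t / lam⌋ t := rfl

lemma ell_le_interpG (ε lam : ℝ) (hlam : 0 < lam) (m : ℤ) (t : ℝ) :
    ellG ε lam m t ≤ interpG ε lam t := by
  rw [interpG_eq_ell]
  set n : ℤ := ⌊t / lam⌋ with hn
  have h1 : lam * n ≤ t := by
    have := Int.floor_le (t / lam)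
    calc lam * n ≤ lam * (t / lam) := by nlinarith
    _ = t := by field_simp
  have h2 : t ≤ lam * (n + 1) := by
    have := (Int.lt_floor_add_one (t / lam)).le
    calc t = lam * (t / lam) := by field_simp
    _ ≤ lam * (n + 1) := by nlinarith
  unfold ellG
  rcases le_or_gt m n with h | h
  · have hk : (0:ℝ) ≤ (n:ℝ) - m := by
      have : ((m:ℝ)) ≤ n := by exact_mod_cast h
      linarith
    have hk1 : (0:ℝ) ≤ ((n:ℝ) - m) * (((n:ℝ) - m) - 1) := by
      rcases eq_or_lt_of_le h with rfl | h'
      · simp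
      · have : (1:ℝ) ≤ (n:ℝ) - m := by
          have : (1:ℤ) ≤ n - m := by omega
          exact_mod_cast this
        nlinarith
    nlinarith [mul_nonneg (mul_nonneg hlam.le hk) (sub_nonneg.2 h1),
      mul_nonneg (mul_nonneg hlam.le hlam.le) hk1]
  · have hk : (0:ℝ) ≤ (m:ℝ) - n := by
      have : ((n:ℝ)) ≤ m := by exact_mod_cast h.le
      linarith
    have hk2 : (0:ℝ) ≤ ((n:ℝ) - m) * (((n:ℝ) - m) + 1) := by
      have : (1:ℝ) ≤ (m:ℝ) - n := by
        have : (1:ℤ) ≤ m - n := by omega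
        exact_mod_cast this
      nlinarith
    nlinarith [mul_nonneg (mul_nonneg hlam.le hk) (sub_nonneg.2 h2),
      mul_nonneg (mul_nonneg hlam.le hlam.le) hk2]

lemma interpG_at_node (ε lam : ℝ) (hlam : 0 < lam) (n : ℤ) :
    interpG ε lam (lam * n) = (lam * n)^2 + ε^2 := by
  have h : (lam * (n:ℝ)) / lam = (n:ℝ) := by field_simp
  rw [interpG_eq_ell, h]
  simp [ellG]

lemma convexOn_interpG (ε lam : ℝ) (hlam : 0 < lam) :
    ConvexOn ℝ univ (interpG ε lam) := by
  refine ⟨convex_univ, fun x _ y _ a b ha hb hab => ?_⟩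
  have hb' : b = 1 - a := by linarith
  subst hb'
  set n : ℤ := ⌊(a * x + (1 - a) * y) / lam⌋ with hn
  have key : interpG ε lam (a • x + (1 - a) • y)
      = a * ellG ε lam n x + (1 - a) * ellG ε lam n y := by
    rw [interpG_eq_ell]
    simp only [smul_eq_mul, ← hn]
    unfold ellG; ring
  rw [key]
  have := ell_le_interpG ε lam hlam n x
  have := ell_le_interpG ε lam hlam n y
  have hb : (0:ℝ) ≤ 1 - a := by linarith
  simp only [smul_eq_mul]
  nlinarith

lemma continuous_interpG (ε lam : ℝ) (hlam : 0 < lam) : Continuous (interpG ε lam) := by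
  rw [← continuousOn_univ]
  exact (convexOn_interpG ε lam hlam).continuousOn isOpen_univ

theorem convexHull_of_vertical_rays
    (ε lam : ℝ) (hε : 0 < ε) (hlam : 0 < lam)
    (ΩI : Set (ℝ × ℝ))
    (hΩI : ΩI = {x : ℝ × ℝ | ∃ n : ℤ, x.1 = lam * n ∧ (lam * n)^2 + ε^2 ≤ x.2}) :
    convexHull ℝ ΩI = {x : ℝ × ℝ | interpG ε lam x.1 ≤ x.2} ∧
    IsClosed (convexHull ℝ ΩI) ∧
    (∀ (x e : ℝ × ℝ), e ≠ 0 →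
      ¬ ((fun α : ℝ => x + α • e) '' Set.Ici 0 ⊆ frontier (convexHull ℝ ΩI))) := by
  set S : Set (ℝ × ℝ) := {x : ℝ × ℝ | interpG ε lam x.1 ≤ x.2} with hS
  have hScont : Continuous (interpG ε lam) := continuous_interpG ε lam hlam
  -- S is convex
  have hSconv : Convex ℝ S := by
    have := (convexOn_interpG ε lam hlam).convex_epigraph
    simpa [hS] using this
  -- ΩI ⊆ S
  have hsub : ΩI ⊆ S := by
    rintro ⟨t, y⟩ hx
    rw [hΩI] at hx
    obtain ⟨n, ht, hy⟩ := hx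
    simp only [hS, mem_setOf_eq] at *
    rw [ht, interpG_at_node ε lam hlam n]
    exact hy
  -- S ⊆ convexHull
  have hsup : S ⊆ convexHull ℝ ΩI := by
    rintro ⟨t, y⟩ hx
    simp only [hS, mem_setOf_eq] at hx
    set n : ℤ := ⌊t / lam⌋ with hn
    have h1 : lam * n ≤ t := by
      have := Int.floor_le (t / lam)
      calc lam * n ≤ lam * (t / lam) := by nlinarith
      _ = t := by field_simp
    have h2 : t ≤ lam * (n + 1) := by
      have := (Int.lt_floor_add_one (t / lam)).le
      calc t = lam * (t / lam) := by field_simp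
      _ ≤ lam * (n + 1) := by nlinarith
    set θ : ℝ := (t - lam * n) / lam with hθ
    have hθ0 : 0 ≤ θ := div_nonneg (by linarith) hlam.le
    have hθ1 : θ ≤ 1 := by
      rw [hθ, div_le_one hlam]; linarith
    set δ : ℝ := y - interpG ε lam t with hδ
    have hδ0 : 0 ≤ δ := by simp [hδ]; linarith
    set p1 : ℝ × ℝ := (lam * n, (lam * n)^2 + ε^2 + δ) with hp1
    set p2 : ℝ × ℝ := (lam * (n+1), (lam * (n+1))^2 + ε^2 + δ) with hp2
    have hm1 : p1 ∈ ΩI := by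
      rw [hΩI]
      refine ⟨n, rfl, ?_⟩
      show (lam * (n:ℝ))^2 + ε^2 ≤ (lam * (n:ℝ))^2 + ε^2 + δ
      linarith
    have hm2 : p2 ∈ ΩI := by
      rw [hΩI]
      refine ⟨n + 1, by push_cast; ring, ?_⟩
      show (lam * ((n + 1 : ℤ) : ℝ))^2 + ε^2 ≤ (lam * ((n:ℝ) + 1))^2 + ε^2 + δ
      push_cast
      linarith
    have hseg : (t, y) ∈ segment ℝ p1 p2 := by
      refine ⟨1 - θ, θ, by linarith, hθ0, by ring, ?_⟩
      have hthl : θ * lam = t - lam * n := by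
        rw [hθ]; field_simp
      have hg : interpG ε lam t
          = (lam * n)^2 + ε^2 + lam * (2 * n + 1) * (t - lam * n) := by
        rw [interpG_eq_ell, ← hn]; rfl
      have : (1 - θ) • p1 + θ • p2 = (t, y) := by
        rw [hp1, hp2, Prod.smul_mk, Prod.smul_mk, Prod.mk_add_mk]
        refine Prod.ext ?_ ?_
        · simp only [smul_eq_mul]
          nlinarith [hthl]
        · simp only [smul_eq_mul]
          have hy : y = interpG ε lam t + δ := by rw [hδ]; ring
          rw [hy, hg]
          nlinarith [hthl]
      rw [this]
    exact segment_subset_convexHull hm1 hm2 hseg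
  have hEq : convexHull ℝ ΩI = S :=
    le_antisymm (convexHull_min hsub hSconv) hsup
  have hSclosed : IsClosed S :=
    isClosed_le (hScont.comp continuous_fst) continuous_snd
  refine ⟨hEq, hEq ▸ hSclosed, ?_⟩
  -- no rays in the frontier
  have hfr : frontier (convexHull ℝ ΩI) ⊆ {x : ℝ × ℝ | interpG ε lam x.1 = x.2} := by
    rw [hEq, hSclosed.frontier_eq]
    rintro ⟨t, y⟩ ⟨hxS, hxI⟩
    simp only [hS, mem_setOf_eq] at hxS ⊢
    by_contra hne
    have hlt : interpG ε lam t < y := lt_of_le_of_ne hxS hne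
    have hopen : IsOpen {x : ℝ × ℝ | interpG ε lam x.1 < x.2} :=
      isOpen_lt (hScont.comp continuous_fst) continuous_snd
    have hU : {x : ℝ × ℝ | interpG ε lam x.1 < x.2} ⊆ S := fun z hz => (le_of_lt hz : interpG ε lam z.1 ≤ z.2)
    exact hxI (interior_maximal hU hopen hlt)
  rintro x e he hray
  have heq : ∀ α : ℝ, 0 ≤ α → interpG ε lam (x.1 + α * e.1) = x.2 + α * e.2 := by
    intro α hα
    have := hfr (hray ⟨α, hα, rfl⟩)
    simpa using this
  by_cases h1 : e.1 = 0
  · have h0 := heq 0 le_rfl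
    have h01 := heq 1 zero_le_one
    rw [h1] at h01
    simp at h0 h01
    have he2 : e.2 = 0 := by linarith [h0, h01]
    exact he (Prod.ext h1 he2)
  · set c : ℝ := e.2 / e.1 with hc
    rcases lt_or_gt_of_ne h1 with hneg | hpos
    · -- e.1 < 0 : go to n → -∞
      obtain ⟨n, hn⟩ := exists_int_lt (min (min (x.1 / lam) (-(1 + |c|) / lam))
        (-(|x.2| + |x.1 * c| + 1) / lam))
      have hn1 : lam * n < x.1 := by
        have := lt_of_lt_of_le hn (le_trans (min_le_left _ _) (min_le_left _ _))
        calc lam * n < lam * (x.1 / lam) := by nlinarith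
        _ = x.1 := by field_simp
      have hn2 : lam * n < -(1 + |c|) := by
        have := lt_of_lt_of_le hn (le_trans (min_le_left _ _) (min_le_right _ _))
        calc lam * n < lam * (-(1 + |c|) / lam) := by nlinarith
        _ = -(1 + |c|) := by field_simp
      have hn3 : lam * n < -(|x.2| + |x.1 * c| + 1) := by
        have := lt_of_lt_of_le hn (min_le_right _ _)
        calc lam * n < lam * (-(|x.2| + |x.1 * c| + 1) / lam) := by nlinarith
        _ = -(|x.2| + |x.1 * c| + 1) := by field_simp
      set α : ℝ := (lam * n - x.1) / e.1 with hα
      have hα0 : 0 ≤ α := div_nonneg_of_nonpos (by linarith) hneg.le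
      have hx1 : x.1 + α * e.1 = lam * n := by
        rw [hα]; field_simp; ring
      have hx2 : α * e.2 = (lam * n - x.1) * c := by
        rw [hα, hc]; ring
      have hkey := heq α hα0
      rw [hx1, interpG_at_node ε lam hlam n, hx2] at hkey
      set L : ℝ := lam * n with hL
      have hM : 0 < -L := by have := abs_nonneg c; linarith
      have p1 : 0 ≤ (-L) * ((-L) - 1 - |c|) :=
        mul_nonneg hM.le (by linarith)
      have p2 : 0 ≤ (|c| + c) * (-L) :=
        mul_nonneg (by have := neg_abs_le c; linarith) hM.le
      have e1 : (-L) * ((-L) - 1 - |c|) = L^2 + L + |c| * L := by ring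
      have e2 : (|c| + c) * (-L) = -(|c| * L) - c * L := by ring
      have e3 : (L - x.1) * c = L * c - x.1 * c := by ring
      have he2 : 0 < ε^2 := pow_pos hε 2
      linarith [le_abs_self x.2, neg_abs_le (x.1 * c)]
    · -- e.1 > 0 : go to n → +∞
      obtain ⟨n, hn⟩ := exists_int_gt (max (max (x.1 / lam) ((1 + |c|) / lam))
        ((|x.2| + |x.1 * c| + 1) / lam))
      have hn1 : x.1 < lam * n := by
        have := lt_of_le_of_lt (le_trans (le_max_left _ _) (le_max_left _ _)) hn
        calc x.1 = lam * (x.1 / lam) := by field_simp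
        _ < lam * n := by nlinarith
      have hn2 : 1 + |c| < lam * n := by
        have := lt_of_le_of_lt (le_trans (le_max_right _ _) (le_max_left _ _)) hn
        calc (1 + |c|) = lam * ((1 + |c|) / lam) := by field_simp
        _ < lam * n := by nlinarith
      have hn3 : |x.2| + |x.1 * c| + 1 < lam * n := by
        have := lt_of_le_of_lt (le_max_right _ _) hn
        calc (|x.2| + |x.1 * c| + 1) = lam * ((|x.2| + |x.1 * c| + 1) / lam) := by field_simp
        _ < lam * n := by nlinarith
      set α : ℝ := (lam * n - x.1) / e.1 with hα
      have hα0 : 0 ≤ α := div_nonneg (by linarith) hpos.le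
      have hx1 : x.1 + α * e.1 = lam * n := by
        rw [hα]; field_simp; ring
      have hx2 : α * e.2 = (lam * n - x.1) * c := by
        rw [hα, hc]; ring
      have hkey := heq α hα0
      rw [hx1, interpG_at_node ε lam hlam n, hx2] at hkey
      set L : ℝ := lam * n with hL
      have hM : 0 < L := by have := abs_nonneg c; linarith
      have p1 : 0 ≤ L * (L - 1 - |c|) :=
        mul_nonneg hM.le (by linarith)
      have p2 : 0 ≤ (|c| - c) * L :=
        mul_nonneg (by have := le_abs_self c; linarith) hM.le
      have e1 : L * (L - 1 - |c|) = L^2 - L - |c| * L := by ring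
      have e2 : (|c| - c) * L = |c| * L - c * L := by ring
      have e3 : (L - x.1) * c = L * c - x.1 * c := by ring
      have he2 : 0 < ε^2 := pow_pos hε 2
      linarith [le_abs_self x.2, neg_abs_le (x.1 * c)]
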